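/- Let A ⊆ ℝⁿ be a nonempty closed proper subset of ℝⁿ, and let r > 0. Then A is r-strongly convex if and only if A is convex and r-spherically supported. -/

import Mathlib

open scoped RealInnerProductSpace

variable {E : Type*} [NormedAddCommGroup E] [InnerProductSpace ℝ E]


/-- A unit vector satisfying the strong support inequality yields a supporting ball. -/
lemma aux_support_ball {A : Set E} {r : ℝ} (hr : 0 < r) {a ν : E} (hν : ‖ν‖ = 1)
    (h : ∀ x ∈ A, ⟪ν, x - a⟫ ≤ -(1 / (2 * r)) * ‖x - a‖ ^ 2) :
    ∀ y ∈ A, ‖y - (a - r • ν)‖ ≤ r := by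
  intro y hy
  have e : y - (a - r • ν) = (y - a) + r • ν := by abel
  have hsq : ‖y - (a - r • ν)‖ ^ 2 ≤ r ^ 2 := by
    rw [e, norm_add_sq_real, real_inner_smul_right, norm_smul, Real.norm_eq_abs,
      abs_of_pos hr, hν]
    have h1 := h y hy
    rw [real_inner_comm] at h1
    have hrne : (2 * r) ≠ 0 := by positivity
    have h2 : r * inner ℝ (y - a) ν ≤ -(1/2) * ‖y - a‖ ^ 2 := by
      have h3 := mul_le_mul_of_nonneg_left h1 hr.le
      have h4 : r * (-(1 / (2 * r)) * ‖y - a‖ ^ 2) = -(1/2) * ‖y - a‖ ^ 2 := by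
        field_simp
      linarith
    nlinarith [sq_nonneg ‖y - a‖]
  nlinarith [norm_nonneg (y - (a - r • ν)), hr.le]

lemma aux_frontier_nonempty {X : Type*} [TopologicalSpace X] [PreconnectedSpace X]
    {A : Set X} (hne : A.Nonempty) (hcl : IsClosed A) (hproper : A ≠ Set.univ) :
    (frontier A).Nonempty := by
  by_contra h
  rw [Set.not_nonempty_iff_eq_empty] at h
  have hAo : IsOpen A := by
    have : A ⊆ interior A := by
      intro x hx
      by_contra hxi
      exact (Set.eq_empty_iff_forall_notMem.mp h x) ⟨subset_closure hx, hxi⟩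
    have h2 : interior A = A := Set.Subset.antisymm interior_subset this
    exact h2 ▸ isOpen_interior
  rcases isClopen_iff.mp ⟨hcl, hAo⟩ with h1 | h1
  · exact hne.ne_empty h1
  · exact hproper h1

/-- The proximal normal cone to `A` at `a`. -/
def proxNormalCone (A : Set E) (a : E) : Set E :=
  {ζ : E | ∃ σ : ℝ, 0 ≤ σ ∧ ∀ x ∈ A, ⟪ζ, x - a⟫ ≤ σ * ‖x - a‖ ^ 2}

/-- `A` is `r`-strongly convex: it is the intersection of a nonempty family of
closed balls of radius `r`. -/
def IsStronglyConvex (r : ℝ) (A : Set E) : Prop :=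
  ∃ C : Set E, C.Nonempty ∧ A = ⋂ c ∈ C, Metric.closedBall c r

/-- `A` is `r`-spherically supported. -/
def IsSphericallySupported (r : ℝ) (A : Set E) : Prop :=
  ∀ a ∈ frontier A, ∃ ζ ∈ proxNormalCone A a, ζ ≠ 0 ∧
    ∀ x ∈ A, ⟪‖ζ‖⁻¹ • ζ, x - a⟫ ≤ -(1 / (2 * r)) * ‖x - a‖ ^ 2

/-- `A` is epi-Lipschitz (wedged). -/
def IsEpiLipschitz (A : Set E) : Prop :=
  ∀ a ∈ frontier A, ∃ v : E, ∃ ε : ℝ, 0 < ε ∧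
    ∀ a' ∈ A, ‖a' - a‖ < ε → ∀ t : ℝ, 0 ≤ t → t < ε →
      ∀ w : E, ‖w - v‖ < ε → a' + t • w ∈ A

/-- The set of farthest points of `A` from `x`. -/
def farPoints (A : Set E) (x : E) : Set E :=
  {a : E | a ∈ A ∧ ∀ b ∈ A, ‖x - b‖ ≤ ‖x - a‖}

/-- `E_r(A)`: the set of points whose farthest distance to `A` exceeds `r`. -/
def farExceeds (r : ℝ) (A : Set E) : Set E := {x : E | ∃ a ∈ A, r < ‖x - a‖}

/-- `A` is `r`-negatively `S`-convex. -/
def IsNegSConvex (r : ℝ) (S A : Set E) : Prop :=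
  ¬ ∃ a ∈ frontier A, ∃ a' ∈ frontier A, a ≠ a' ∧
      ∃ ζ ∈ proxNormalCone A a, ‖ζ‖ = 1 ∧
        ∃ ζ' ∈ proxNormalCone A a', ‖ζ'‖ = 1 ∧
          ∃ t : ℝ, r < t ∧ ∃ t' : ℝ, r < t' ∧
            a - t • ζ = a' - t' • ζ' ∧ a - t • ζ ∈ S

/-- `A` satisfies the exterior `r`-sphere condition. -/
def SatisfiesExtSphere (r : ℝ) (A : Set E) : Prop :=
  ∀ a ∈ frontier A, ∃ ζ ∈ proxNormalCone A a, ζ ≠ 0 ∧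
    ∀ x ∈ A, ⟪‖ζ‖⁻¹ • ζ, x - a⟫ ≤ (1 / (2 * r)) * ‖x - a‖ ^ 2

/-- `A` is `r`-prox-regular. -/
def IsProxRegular (r : ℝ) (A : Set E) : Prop :=
  ∀ a ∈ frontier A, ∀ ζ ∈ proxNormalCone A a, ζ ≠ 0 →
    ∀ x ∈ A, ⟪‖ζ‖⁻¹ • ζ, x - a⟫ ≤ (1 / (2 * r)) * ‖x - a‖ ^ 2

set_option maxHeartbeats 2000000 in
theorem statement_2 {n : ℕ} (A : Set (EuclideanSpace ℝ (Fin n)))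
    (hne : A.Nonempty) (hcl : IsClosed A) (hproper : A ≠ Set.univ)
    (r : ℝ) (hr : 0 < r) :
    IsStronglyConvex r A ↔ Convex ℝ A ∧ IsSphericallySupported r A := by
  constructor
  · rintro ⟨C, hCne, hAeq⟩
    constructor
    · rw [hAeq]
      exact convex_iInter fun c => convex_iInter fun _ => convex_closedBall c r
    · intro a ha
      have haA : a ∈ A := hcl.frontier_subset ha
      -- the set of admissible centers
      set D : Set (EuclideanSpace ℝ (Fin n)) := {c | ∀ y ∈ A, ‖y - c‖ ≤ r} with hD
      have hCD : C ⊆ D := by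
        intro c hc y hy
        have : y ∈ ⋂ c ∈ C, Metric.closedBall c r := hAeq ▸ hy
        have := Set.mem_iInter₂.mp this c hc
        rwa [Metric.mem_closedBall, dist_eq_norm] at this
      have hDcl : IsClosed D := by
        have : D = ⋂ y ∈ A, {c | ‖y - c‖ ≤ r} := by
          ext c; simp [hD, Set.mem_iInter₂]
        rw [this]
        exact isClosed_biInter fun y _ =>
          isClosed_le (by fun_prop) continuous_const
      have hDsub : D ⊆ Metric.closedBall a r := by
        intro c hc
        have := hc a haA
        rwa [Metric.mem_closedBall, dist_comm, dist_eq_norm]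
      have hDcpt : IsCompact D :=
        (isCompact_closedBall a r).of_isClosed_subset hDcl hDsub
      have hDne : D.Nonempty := hCne.mono hCD
      obtain ⟨cs, hcsD, hmax⟩ := hDcpt.exists_isMaxOn hDne
        (f := fun c => ‖a - c‖) (by fun_prop)
      set m := ‖a - cs‖ with hm
      have hmr : m ≤ r := hcsD a haA
      -- m = r, else a is interior
      have hmeq : m = r := by
        by_contra hne'
        have hml : m < r := lt_of_le_of_ne hmr hne'
        have hsub : Metric.ball a (r - m) ⊆ A := by
          intro x hx
          rw [hAeq, Set.mem_iInter₂]
          intro c hcC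
          rw [Metric.mem_closedBall, dist_eq_norm]
          refine le_of_lt ?_
          have h1 : ‖x - a‖ < r - m := by
            rwa [Metric.mem_ball, dist_eq_norm] at hx
          have h2 : ‖a - c‖ ≤ m := hmax (hCD hcC)
          calc ‖x - c‖ ≤ ‖x - a‖ + ‖a - c‖ := norm_sub_le_norm_sub_add_norm_sub x a c
            _ < (r - m) + m := by linarith
            _ = r := by ring
        have : a ∈ interior A :=
          mem_interior_iff_mem_nhds.mpr (Filter.mem_of_superset
            (Metric.ball_mem_nhds a (by linarith)) hsub)
        exact ha.2 this
      -- the proximal normal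
      refine ⟨a - cs, ⟨0, le_refl 0, ?_⟩, ?_, ?_⟩
      · intro x hx
        have hkey : ⟪a - cs, x - a⟫ ≤ -(1/2) * ‖x - a‖ ^ 2 := by
          have h1 : ‖x - cs‖ ≤ r := hcsD x hx
          have e : x - cs = (x - a) + (a - cs) := by abel
          have h2 : ‖x - cs‖ ^ 2 ≤ r ^ 2 := by
            nlinarith [norm_nonneg (x - cs)]
          rw [e, norm_add_sq_real] at h2
          rw [← hm, hmeq] at h2
          rw [real_inner_comm]
          nlinarith
        nlinarith [sq_nonneg ‖x - a‖]
      · intro h0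
        rw [sub_eq_zero] at h0
        have : m = 0 := by rw [hm, h0, sub_self, norm_zero]
        rw [hmeq] at this; linarith
      · intro x hx
        have hkey : ⟪a - cs, x - a⟫ ≤ -(1/2) * ‖x - a‖ ^ 2 := by
          have h1 : ‖x - cs‖ ≤ r := hcsD x hx
          have e : x - cs = (x - a) + (a - cs) := by abel
          have h2 : ‖x - cs‖ ^ 2 ≤ r ^ 2 := by
            nlinarith [norm_nonneg (x - cs)]
          rw [e, norm_add_sq_real] at h2
          rw [← hm, hmeq] at h2
          rw [real_inner_comm]
          nlinarith
        have hnorm : ‖a - cs‖ = r := by rw [← hm, hmeq]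
        rw [real_inner_smul_left, hnorm]
        have hrinv : (0:ℝ) < r⁻¹ := by positivity
        have := mul_le_mul_of_nonneg_left hkey hrinv.le
        calc r⁻¹ * ⟪a - cs, x - a⟫ ≤ r⁻¹ * (-(1/2) * ‖x - a‖ ^ 2) := this
          _ = -(1 / (2 * r)) * ‖x - a‖ ^ 2 := by
              rw [← mul_assoc]
              congr 1
              field_simp
  · rintro ⟨hconv, hsupp⟩
    have hsupp' : ∀ a ∈ frontier A, ∃ ν : EuclideanSpace ℝ (Fin n), ‖ν‖ = 1 ∧
        ∀ x ∈ A, ⟪ν, x - a⟫ ≤ -(1 / (2 * r)) * ‖x - a‖ ^ 2 := by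
      intro a ha
      obtain ⟨ζ, _, hζ0, hζ⟩ := hsupp a ha
      exact ⟨‖ζ‖⁻¹ • ζ, norm_smul_inv_norm hζ0, hζ⟩
    set C : Set (EuclideanSpace ℝ (Fin n)) := {c | ∀ y ∈ A, ‖y - c‖ ≤ r} with hCdef
    have hCne : C.Nonempty := by
      obtain ⟨a0, ha0⟩ := aux_frontier_nonempty hne hcl hproper
      obtain ⟨ν, hν1, hν⟩ := hsupp' a0 ha0
      exact ⟨a0 - r • ν, aux_support_ball hr hν1 hν⟩
    refine ⟨C, hCne, Set.Subset.antisymm ?_ ?_⟩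
    · intro y hy
      rw [Set.mem_iInter₂]
      intro c hc
      rw [Metric.mem_closedBall, dist_eq_norm]
      exact hc y hy
    · intro z hz
      by_contra hzA
      obtain ⟨p, hpA, hpproj⟩ :=
        exists_norm_eq_iInf_of_complete_convex hne hcl.isComplete hconv z
      have hproj : ∀ w ∈ A, ⟪z - p, w - p⟫ ≤ 0 :=
        (norm_eq_iInf_iff_real_inner_le_zero hconv hpA).mp hpproj
      have hδ : 0 < ‖z - p‖ := by
        rw [norm_pos_iff, sub_ne_zero]
        intro h
        exact hzA (h ▸ hpA)
      -- p is a frontier point of A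
      have hpfr : p ∈ frontier A := by
        refine ⟨subset_closure hpA, fun hint => ?_⟩
        rw [mem_interior_iff_mem_nhds, Metric.mem_nhds_iff] at hint
        obtain ⟨ε, hε, hball⟩ := hint
        set t : ℝ := min (ε / (2 * ‖z - p‖)) 1 with htdef
        have htpos : 0 < t := lt_min (by positivity) one_pos
        have ht1 : t * ‖z - p‖ < ε := by
          have h1 : t ≤ ε / (2 * ‖z - p‖) := min_le_left _ _
          have h2 : ε / (2 * ‖z - p‖) * ‖z - p‖ = ε / 2 := by field_simp
          nlinarith [mul_le_mul_of_nonneg_right h1 hδ.le]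
        have hmem : p + t • (z - p) ∈ A := by
          apply hball
          rw [Metric.mem_ball, dist_eq_norm]
          have : p + t • (z - p) - p = t • (z - p) := by abel
          rw [this, norm_smul, Real.norm_eq_abs, abs_of_pos htpos]
          exact ht1
        have h3 := hproj _ hmem
        have h4 : p + t • (z - p) - p = t • (z - p) := by abel
        rw [h4, real_inner_smul_right, real_inner_self_eq_norm_sq] at h3
        nlinarith [mul_pos htpos (pow_pos hδ 2)]
      obtain ⟨ν, hν1, hν⟩ := hsupp' p hpfr
      have hcC : ∀ y ∈ A, ‖y - (p - r • ν)‖ ≤ r := aux_support_ball hr hν1 hν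
      have hβlow : -‖z - p‖ ≤ ⟪z - p, ν⟫ := by
        have h1 := abs_real_inner_le_norm (z - p) ν
        rw [hν1, mul_one] at h1
        linarith [neg_abs_le (⟪z - p, ν⟫)]
      have hzball : ∀ c' ∈ C, ‖z - c'‖ ≤ r := by
        intro c' hc'
        have := Set.mem_iInter₂.mp hz c' hc'
        rwa [Metric.mem_closedBall, dist_eq_norm] at this
      have key : ∀ k : ℕ, 2 * r * ⟪z - p, ν⟫ ≤ -((k : ℝ) + 1) * ‖z - p‖ ^ 2 := by
        intro k
        induction k with
        | zero =>
          have h1 : ‖z - (p - r • ν)‖ ≤ r := hzball _ hcC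
          have e : z - (p - r • ν) = (z - p) + r • ν := by abel
          have h2 : ‖z - (p - r • ν)‖ ^ 2 ≤ r ^ 2 := by
            nlinarith [norm_nonneg (z - (p - r • ν))]
          rw [e, norm_add_sq_real, real_inner_smul_right, norm_smul, Real.norm_eq_abs,
            abs_of_pos hr, hν1] at h2
          push_cast
          nlinarith
        | succ k ih =>
          have ht : (0 : ℝ) < (k : ℝ) + 1 := by positivity
          have hc'C : (p - r • ν) - ((k : ℝ) + 1) • (z - p) ∈ C := by
            intro y hy
            have e : y - ((p - r • ν) - ((k : ℝ) + 1) • (z - p)) =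
                (y - (p - r • ν)) + ((k : ℝ) + 1) • (z - p) := by abel
            have h1 : ‖y - (p - r • ν)‖ ≤ r := hcC y hy
            have h2 : ⟪z - p, y - (p - r • ν)⟫ ≤ r * ⟪z - p, ν⟫ := by
              have e2 : y - (p - r • ν) = (y - p) + r • ν := by abel
              rw [e2, inner_add_right, real_inner_smul_right]
              linarith [hproj y hy]
            have hsq : ‖y - ((p - r • ν) - ((k : ℝ) + 1) • (z - p))‖ ^ 2 ≤ r ^ 2 := by
              rw [e, norm_add_sq_real, real_inner_smul_right, norm_smul,
                Real.norm_eq_abs, abs_of_pos ht]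
              rw [real_inner_comm (z - p) (y - (p - r • ν))]
              nlinarith [sq_nonneg ‖z - p‖, mul_le_mul_of_nonneg_left h2 ht.le,
                norm_nonneg (y - (p - r • ν))]
            nlinarith [norm_nonneg (y - ((p - r • ν) - ((k : ℝ) + 1) • (z - p))), hr.le]
          have h3 : ‖z - ((p - r • ν) - ((k : ℝ) + 1) • (z - p))‖ ≤ r := hzball _ hc'C
          have e2 : z - ((p - r • ν) - ((k : ℝ) + 1) • (z - p)) =
              (1 + ((k : ℝ) + 1)) • (z - p) + r • ν := by module
          have h4 : ‖z - ((p - r • ν) - ((k : ℝ) + 1) • (z - p))‖ ^ 2 ≤ r ^ 2 := by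
            nlinarith [norm_nonneg (z - ((p - r • ν) - ((k : ℝ) + 1) • (z - p)))]
          rw [e2, norm_add_sq_real, norm_smul, Real.norm_eq_abs, abs_of_pos (by positivity :
            (0:ℝ) < 1 + ((k : ℝ) + 1)), norm_smul, Real.norm_eq_abs, abs_of_pos hr, hν1,
            real_inner_smul_left, real_inner_smul_right] at h4
          have hc2 : (0:ℝ) < (k:ℝ) + 2 := by positivity
          have h5 : ((k:ℝ) + 2) * (2 * r * ⟪z - p, ν⟫) ≤
              ((k:ℝ) + 2) * (-(((k:ℝ) + 1) + 1) * ‖z - p‖ ^ 2) := by nlinarith [h4]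
          have h6 := le_of_mul_le_mul_left h5 hc2
          push_cast
          linarith [h6]
      obtain ⟨k, hk⟩ := exists_nat_gt (2 * r / ‖z - p‖)
      have hkey := key k
      have hk' : 2 * r < (k : ℝ) * ‖z - p‖ := (div_lt_iff₀ hδ).mp hk
      nlinarith [mul_le_mul_of_nonneg_left hβlow (by positivity : (0:ℝ) ≤ 2 * r),
        mul_lt_mul_of_pos_right hk' hδ, sq_nonneg ‖z - p‖, hδ]
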